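/- Let μ be a Borel probability measure on [0,1]^d such that μ(Q_w) > 0 for every word w and μ assigns zero measure to the topological boundary of every dyadic cube Q_w. Then for all 0 < δ' < δ, h(μ,δ') ≤ liminf_{m→∞} (log₂ h_{m,δ}(μ))/m. In particular, dim_qL μ ≤ inf_{δ>0} liminf_{m→∞} (log₂ h_{m,δ}(μ))/m, so if inf_{δ>0} liminf_{m→∞} (log₂ h_{m,δ}(μ))/m = 0 then dim_qL μ = 0. -/

import Mathlib

open MeasureTheory Filter Set
open scoped ENNReal NNReal

/-- The alphabet `Λ = {0,1}^d`, identified with `{0,…,2^d−1}`. -/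
abbrev Lam (d : ℕ) := Fin d → Bool

/-- Finite words over the alphabet `Λ` (including the empty word). -/
abbrev Wd (d : ℕ) := List (Lam d)

/-- A word `w = w_1⋯w_m` is central if for each coordinate `i` the digit string
`(w_1(i),…,w_m(i))` equals `(0,1,1,…,1)` or `(1,0,0,…,0)`. -/
def IsCentral (d : ℕ) (w : Wd d) : Prop :=
  ∀ i : Fin d, ∃ b : Bool, w.map (fun a => a i) = b :: List.replicate (w.length - 1) (!b)

/-- The lower corner of the dyadic cube of the word `w`: `a_i = Σ_j w_j(i) 2^{−j}`. -/
noncomputable def dyadicA (d : ℕ) (w : Wd d) (i : Fin d) : ℝ :=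
  ∑ j : Fin w.length, (if w.get j i then ((2 : ℝ) ^ (j.val + 1))⁻¹ else 0)

/-- The dyadic cube `Q_w ⊆ [0,1]^d` of generation `|w|`: product of the intervals
`[a_i, a_i + 2^{−k})`, taken as `[a_i, 1]` when `a_i + 2^{−k} = 1`. -/
noncomputable def Qcube (d : ℕ) (w : Wd d) : Set (Fin d → ℝ) :=
  {y | ∀ i, dyadicA d w i ≤ y i ∧
       (y i < dyadicA d w i + ((2 : ℝ) ^ w.length)⁻¹ ∨
        (dyadicA d w i + ((2 : ℝ) ^ w.length)⁻¹ = 1 ∧ y i ≤ 1))}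

noncomputable def A1 (l : List Bool) : ℝ :=
  ∑ j : Fin l.length, (if l.get j then ((2 : ℝ) ^ (j.val + 1))⁻¹ else 0)

lemma A1_nil : A1 [] = 0 := by simp [A1]

lemma A1_cons (b : Bool) (l : List Bool) :
    A1 (b :: l) = (if b then (2:ℝ)⁻¹ else 0) + 2⁻¹ * A1 l := by
  show (∑ j : Fin (l.length + 1), if (b :: l).get j then ((2 : ℝ) ^ (j.val + 1))⁻¹ else 0) = _
  rw [Fin.sum_univ_succ, A1, Finset.mul_sum]
  simp only [List.get_eq_getElem, List.getElem_cons_succ, List.getElem_cons_zero, Fin.val_succ,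
    Fin.val_zero, pow_succ, mul_inv, mul_ite, mul_zero]
  congr 1
  · norm_num
  · exact Finset.sum_congr rfl fun j _ => by rcases h : l[j.val] <;> simp [h] <;> ring

lemma A1_nonneg (l : List Bool) : 0 ≤ A1 l := by
  unfold A1; positivity

lemma A1_le (l : List Bool) : A1 l ≤ 1 - ((2:ℝ) ^ l.length)⁻¹ := by
  induction l with
  | nil => simp [A1_nil]
  | cons b l ih =>
    have h0 := A1_nonneg l
    have h2 : (0:ℝ) < 2 ^ l.length := by positivity
    have h3 : ((2:ℝ) ^ l.length * 2)⁻¹ = (2 ^ l.length)⁻¹ * 2⁻¹ := by rw [mul_inv]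
    rw [A1_cons, show (b :: l).length = l.length + 1 from rfl, pow_succ, h3]
    rcases b <;> norm_num <;> linarith

lemma A1_replicate_false (k : ℕ) : A1 (List.replicate k false) = 0 := by
  induction k with
  | zero => simp [A1_nil]
  | succ k ih => rw [List.replicate_succ, A1_cons, ih]; simp

lemma A1_replicate_true (k : ℕ) : A1 (List.replicate k true) = 1 - ((2:ℝ)^k)⁻¹ := by
  induction k with
  | zero => simp [A1_nil]
  | succ k ih =>
    rw [List.replicate_succ, A1_cons, ih, pow_succ, mul_inv, if_pos rfl]
    ring

lemma dyadicA_nil (d : ℕ) (i : Fin d) : dyadicA d [] i = 0 := by simp [dyadicA]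

lemma dyadicA_cons (d : ℕ) (b : Lam d) (l : Wd d) (i : Fin d) :
    dyadicA d (b :: l) i = (if b i then (2:ℝ)⁻¹ else 0) + 2⁻¹ * dyadicA d l i := by
  show (∑ j : Fin (l.length + 1), if (b :: l).get j i then ((2 : ℝ) ^ (j.val + 1))⁻¹ else 0) = _
  rw [Fin.sum_univ_succ, dyadicA, Finset.mul_sum]
  simp only [List.get_eq_getElem, List.getElem_cons_succ, List.getElem_cons_zero, Fin.val_succ,
    Fin.val_zero, pow_succ, mul_inv, mul_ite, mul_zero]
  congr 1
  · norm_num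
    rfl
  · exact Finset.sum_congr rfl fun j _ => by rcases h : l[j.val] i <;> simp [h] <;> ring

lemma dyadicA_eq_A1 (d : ℕ) (w : Wd d) (i : Fin d) :
    dyadicA d w i = A1 (w.map (fun a => a i)) := by
  induction w with
  | nil => simp [dyadicA_nil, A1_nil]
  | cons b l ih => rw [dyadicA_cons, List.map_cons, A1_cons, ih]

lemma dyadicA_nonneg (d : ℕ) (w : Wd d) (i : Fin d) : 0 ≤ dyadicA d w i := by
  rw [dyadicA_eq_A1]; exact A1_nonneg _

lemma dyadicA_append (d : ℕ) (ω w : Wd d) (i : Fin d) :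
    dyadicA d (ω ++ w) i = dyadicA d ω i + ((2:ℝ) ^ ω.length)⁻¹ * dyadicA d w i := by
  induction ω with
  | nil => simp [dyadicA_nil]
  | cons a l ih =>
    rw [List.cons_append, dyadicA_cons, dyadicA_cons, ih,
      show (a :: l).length = l.length + 1 from rfl, pow_succ, mul_inv]
    ring

lemma Qcube_mem_Icc {d : ℕ} {w : Wd d} {y : Fin d → ℝ} (hy : y ∈ Qcube d w) (i : Fin d) :
    dyadicA d w i ≤ y i ∧ y i ≤ dyadicA d w i + ((2 : ℝ) ^ w.length)⁻¹ := by
  obtain ⟨h1, h2⟩ := hy i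
  refine ⟨h1, ?_⟩
  rcases h2 with h | ⟨he, hle⟩
  · exact h.le
  · rw [he]; exact hle

lemma mem_Qcube {d : ℕ} {w : Wd d} {y : Fin d → ℝ}
    (h : ∀ i, dyadicA d w i ≤ y i ∧ y i < dyadicA d w i + ((2 : ℝ) ^ w.length)⁻¹) :
    y ∈ Qcube d w := fun i => ⟨(h i).1, Or.inl (h i).2⟩

lemma Qcube_eq_pi (d : ℕ) (w : Wd d) :
    Qcube d w = Set.pi univ (fun i =>
      {t : ℝ | dyadicA d w i ≤ t ∧
        (t < dyadicA d w i + ((2 : ℝ) ^ w.length)⁻¹ ∨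
        (dyadicA d w i + ((2 : ℝ) ^ w.length)⁻¹ = 1 ∧ t ≤ 1))}) := by
  ext y; simp [Qcube, Set.mem_pi]

lemma closure_Qcube (d : ℕ) (w : Wd d) :
    closure (Qcube d w) = Set.pi univ (fun i =>
      Icc (dyadicA d w i) (dyadicA d w i + ((2 : ℝ) ^ w.length)⁻¹)) := by
  rw [Qcube_eq_pi, closure_pi_set]
  refine Set.pi_congr rfl fun i _ => ?_
  set a := dyadicA d w i
  set c := ((2 : ℝ) ^ w.length)⁻¹
  have hc : 0 < c := by positivity
  apply subset_antisymm
  · refine closure_minimal ?_ isClosed_Icc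
    rintro t ⟨h1, h2 | ⟨he, hle⟩⟩
    · exact ⟨h1, h2.le⟩
    · exact ⟨h1, by rw [he]; exact hle⟩
  · rw [← closure_Ico (show a ≠ a + c by linarith)]
    exact closure_mono (fun t ht => ⟨ht.1, Or.inl ht.2⟩)

/-- The support of a measure on `ℝ^d`: points all of whose closed balls have positive measure. -/
def msupport (d : ℕ) (μ : Measure (Fin d → ℝ)) : Set (Fin d → ℝ) :=
  {x | ∀ r : ℝ, 0 < r → 0 < μ (Metric.closedBall x r)}

/-- `h(μ,δ)`: the supremum of exponents `s` admissible for the lower (quasi-)Assouad condition. -/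
noncomputable def hfun (d : ℕ) (μ : Measure (Fin d → ℝ)) (δ : ℝ) : ℝ≥0∞ :=
  ⨆ (s : ℝ) (_ : ∃ C : ℝ, 0 < C ∧ ∀ x ∈ msupport d μ, ∀ r R : ℝ,
      0 < r → r < R ^ (1 + δ) → R ^ (1 + δ) < R → R < 1 →
      ENNReal.ofReal (C * (R / r) ^ s) ≤ μ (Metric.closedBall x R) / μ (Metric.closedBall x r)),
    ENNReal.ofReal s

/-- The lower quasi-Assouad dimension `dim_qL μ = lim_{δ→0+} h(μ,δ) = inf_{δ>0} h(μ,δ)`. -/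
noncomputable def dimqL (d : ℕ) (μ : Measure (Fin d → ℝ)) : ℝ≥0∞ :=
  ⨅ (δ : ℝ) (_ : 0 < δ), hfun d μ δ

/-- `h_{m,δ}(μ)`: min over words `ω` of length `⌊m/δ⌋` of the min over central words `w`
of length `m` of `μ(Q_ω)/μ(Q_{ωw})`. -/
noncomputable def hmdMeas (d : ℕ) (μ : Measure (Fin d → ℝ)) (δ : ℝ) (m : ℕ) : ℝ≥0∞ :=
  ⨅ (ω : Wd d) (_ : ω.length = ⌊(m : ℝ) / δ⌋₊),
    ⨅ (w : Wd d) (_ : w.length = m ∧ IsCentral d w), μ (Qcube d ω) / μ (Qcube d (ω ++ w))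

/-- Base-2 logarithm on `ℝ≥0∞` (with `log₂ ∞ = ∞`). -/
noncomputable def log2 (y : ℝ≥0∞) : ℝ≥0∞ :=
  if y = ⊤ then ⊤ else ENNReal.ofReal (Real.logb 2 y.toReal)

/-- The center of the cube `Q_ω`. -/
noncomputable def qcenter (d : ℕ) (ω : Wd d) : Fin d → ℝ :=
  fun i => dyadicA d ω i + ((2:ℝ) ^ (ω.length + 1))⁻¹

lemma two_inv_succ (n : ℕ) : ((2:ℝ) ^ (n+1))⁻¹ + ((2:ℝ) ^ (n+1))⁻¹ = ((2:ℝ)^n)⁻¹ := by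
  have : (0:ℝ) < 2 ^ n := by positivity
  field_simp [pow_succ]
  ring

lemma closedBall_center_subset (d : ℕ) (ω : Wd d) :
    Metric.closedBall (qcenter d ω) (((2:ℝ) ^ (ω.length + 1))⁻¹) ⊆ closure (Qcube d ω) := by
  have hR : (0:ℝ) ≤ ((2:ℝ) ^ (ω.length + 1))⁻¹ := by positivity
  rw [closedBall_pi _ hR, closure_Qcube]
  refine Set.pi_mono fun i _ => ?_
  rw [Real.closedBall_eq_Icc]
  apply Set.Icc_subset_Icc
  · simp [qcenter]
  · simp only [qcenter]
    have := two_inv_succ ω.length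
    linarith

lemma measure_ball_center_le (d : ℕ) (μ : Measure (Fin d → ℝ)) (ω : Wd d)
    (hbdry : μ (frontier (Qcube d ω)) = 0) :
    μ (Metric.closedBall (qcenter d ω) (((2:ℝ) ^ (ω.length + 1))⁻¹)) ≤ μ (Qcube d ω) := by
  calc μ (Metric.closedBall (qcenter d ω) (((2:ℝ) ^ (ω.length + 1))⁻¹))
      ≤ μ (closure (Qcube d ω)) := measure_mono (closedBall_center_subset d ω)
    _ ≤ μ (Qcube d ω ∪ frontier (Qcube d ω)) := by
        refine measure_mono fun t ht => ?_
        by_cases h : t ∈ Qcube d ω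
        · exact Or.inl h
        · exact Or.inr ⟨ht, fun hi => h (interior_subset hi)⟩
    _ ≤ μ (Qcube d ω) + μ (frontier (Qcube d ω)) := measure_union_le _ _
    _ = μ (Qcube d ω) := by rw [hbdry, add_zero]

lemma qcenter_mem_msupport (d : ℕ) (μ : Measure (Fin d → ℝ)) (ω : Wd d)
    (hpos : ∀ w : Wd d, 0 < μ (Qcube d w)) : qcenter d ω ∈ msupport d μ := by
  intro r hr
  obtain ⟨k, hk⟩ := exists_pow_lt_of_lt_one hr (by norm_num : (2:ℝ)⁻¹ < 1)
  set n := ω.length with hn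
  set u : Wd d := (fun _ => true) :: List.replicate k (fun _ => false) with hu
  have hul : u.length = k + 1 := by simp [hu]
  have hsub : Qcube d (ω ++ u) ⊆ Metric.closedBall (qcenter d ω) r := by
    intro y hy
    rw [Metric.mem_closedBall, dist_pi_le_iff hr.le]
    intro i
    have hmap : (u.map (fun a => a i)) = true :: List.replicate k false := by simp [hu]
    have hA : dyadicA d (ω ++ u) i = qcenter d ω i := by
      rw [dyadicA_append, dyadicA_eq_A1 d u i, hmap, A1_cons, A1_replicate_false, qcenter]
      have h2 : (0:ℝ) < 2 ^ n := by positivity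
      rw [← hn]
      field_simp [pow_succ]
      simp only [if_true]
      ring
    have hIcc := Qcube_mem_Icc hy i
    rw [hA] at hIcc
    have hlen : ((2:ℝ) ^ (ω ++ u).length)⁻¹ ≤ r := by
      have h1 : ((2:ℝ) ^ (ω ++ u).length)⁻¹ ≤ (2:ℝ)⁻¹ ^ k := by
        rw [← inv_pow]
        apply pow_le_pow_of_le_one (by norm_num) (by norm_num)
        simp only [List.length_append, hul]
        omega
      linarith
    rw [Real.dist_eq, abs_le]
    constructor <;> nlinarith [hIcc.1, hIcc.2]
  calc (0:ℝ≥0∞) < μ (Qcube d (ω ++ u)) := hpos _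
    _ ≤ μ (Metric.closedBall (qcenter d ω) r) := measure_mono hsub

lemma central_cube_subset_ball (d : ℕ) (ω w : Wd d) (m : ℕ) (hm : 1 ≤ m)
    (hwl : w.length = m) (hw : IsCentral d w) :
    Qcube d (ω ++ w) ⊆ Metric.closedBall (qcenter d ω) (((2:ℝ) ^ (ω.length + m))⁻¹) := by
  obtain ⟨m', rfl⟩ : ∃ m', m = m' + 1 := ⟨m - 1, by omega⟩
  set n := ω.length with hn
  have hr : (0:ℝ) ≤ ((2:ℝ) ^ (n + (m' + 1)))⁻¹ := by positivity
  intro y hy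
  rw [Metric.mem_closedBall, dist_pi_le_iff hr]
  intro i
  obtain ⟨b, hb⟩ := hw i
  rw [hwl] at hb
  simp only [Nat.add_sub_cancel] at hb
  have hIcc := Qcube_mem_Icc hy i
  have hlen : ((2:ℝ) ^ (ω ++ w).length)⁻¹ = ((2:ℝ) ^ (n + (m' + 1)))⁻¹ := by
    rw [List.length_append, hwl]
  have h2n : (0:ℝ) < 2 ^ n := by positivity
  have h2m : (0:ℝ) < 2 ^ m' := by positivity
  have hA : dyadicA d (ω ++ w) i
      = qcenter d ω i - (if b then 0 else ((2:ℝ) ^ (n + (m' + 1)))⁻¹) := by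
    rw [dyadicA_append, dyadicA_eq_A1 d w i, hb, qcenter, ← hn]
    rcases b with _ | _
    · rw [Bool.not_false, A1_cons, A1_replicate_true, if_neg (by simp), if_neg (by simp)]
      field_simp [pow_succ, pow_add]
      ring
    · rw [Bool.not_true, A1_cons, A1_replicate_false, if_pos rfl, if_pos rfl]
      field_simp [pow_succ, pow_add]
      ring
  rw [hlen, hA] at hIcc
  rw [Real.dist_eq, abs_le]
  rcases b with _ | _ <;> norm_num at hIcc <;>
    constructor <;> linarith [hIcc.1, hIcc.2, hr]

lemma two_pow_inv_eq_rpow (a : ℕ) : ((2:ℝ) ^ a)⁻¹ = (2:ℝ) ^ (-(a:ℝ)) := by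
  rw [Real.rpow_neg (by norm_num), Real.rpow_natCast]

lemma key_ratio (d : ℕ) (μ : Measure (Fin d → ℝ)) [IsProbabilityMeasure μ]
    (hpos : ∀ w : Wd d, 0 < μ (Qcube d w)) (hbdry : ∀ w : Wd d, μ (frontier (Qcube d w)) = 0)
    (δ' : ℝ) (hδ' : 0 < δ') (s C : ℝ) (hC : 0 < C)
    (hadm : ∀ x ∈ msupport d μ, ∀ r R : ℝ,
      0 < r → r < R ^ (1 + δ') → R ^ (1 + δ') < R → R < 1 →
      ENNReal.ofReal (C * (R / r) ^ s) ≤ μ (Metric.closedBall x R) / μ (Metric.closedBall x r))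
    (ω w : Wd d) (m : ℕ) (hm : 1 ≤ m) (hwl : w.length = m) (hw : IsCentral d w)
    (hcond : ((ω.length : ℝ) + 1) * (1 + δ') < (ω.length : ℝ) + m) :
    ENNReal.ofReal (C * (((2:ℝ) ^ (m-1)) ^ s)) ≤ μ (Qcube d ω) / μ (Qcube d (ω ++ w)) := by
  set n := ω.length with hn
  set r : ℝ := ((2:ℝ) ^ (n + m))⁻¹ with hrdef
  set R : ℝ := ((2:ℝ) ^ (n + 1))⁻¹ with hRdef
  have hr0 : (0:ℝ) < r := by rw [hrdef]; positivity
  have hR0 : (0:ℝ) < R := by rw [hRdef]; positivity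
  have hRrp : R = (2:ℝ) ^ (-((n:ℝ)+1)) := by
    rw [hRdef, two_pow_inv_eq_rpow]; push_cast; norm_num
  have hrrp : r = (2:ℝ) ^ (-((n:ℝ)+m)) := by
    rw [hrdef, two_pow_inv_eq_rpow]; push_cast; norm_num
  have hRpow : R ^ (1 + δ') = (2:ℝ) ^ ((-((n:ℝ)+1)) * (1 + δ')) := by
    rw [hRrp, ← Real.rpow_mul (by norm_num)]
  have h1 : r < R ^ (1 + δ') := by
    rw [hrrp, hRpow, Real.rpow_lt_rpow_left_iff (by norm_num : (1:ℝ) < 2)]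
    nlinarith
  have h2 : R ^ (1 + δ') < R := by
    rw [hRpow, hRrp, Real.rpow_lt_rpow_left_iff (by norm_num : (1:ℝ) < 2)]
    nlinarith [Nat.cast_nonneg (α := ℝ) n]
  have h3 : R < 1 := by
    rw [hRrp, show (1:ℝ) = (2:ℝ) ^ (0:ℝ) from (Real.rpow_zero 2).symm,
      Real.rpow_lt_rpow_left_iff (by norm_num : (1:ℝ) < 2)]
    nlinarith [Nat.cast_nonneg (α := ℝ) n]
  have hx := qcenter_mem_msupport d μ ω hpos
  have hmain := hadm (qcenter d ω) hx r R hr0 h1 h2 h3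
  have hRr : R / r = (2:ℝ) ^ (m - 1) := by
    rw [hrdef, hRdef, inv_div_inv]
    rw [show n + m = (n + 1) + (m - 1) by omega, pow_add]
    have h0 : ((2:ℝ) ^ (n+1)) ≠ 0 := by positivity
    field_simp
  rw [hRr] at hmain
  refine hmain.trans ?_
  exact ENNReal.div_le_div (measure_ball_center_le d μ ω (hbdry ω))
    (measure_mono (central_cube_subset_ball d ω w m hm hwl hw))

/-- For a Borel probability measure `μ` on `[0,1]^d` giving positive mass to
every dyadic cube and zero mass to all their boundaries: for all `0 < δ' < δ`,
`h(μ,δ') ≤ liminf_m (log₂ h_{m,δ}(μ))/m`; in particular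
`dim_qL μ ≤ inf_{δ>0} liminf_m (log₂ h_{m,δ}(μ))/m`, so if the right side is `0` then
`dim_qL μ = 0`. -/
theorem stmt14 (d : ℕ) (hd : 1 ≤ d) (μ : Measure (Fin d → ℝ)) [IsProbabilityMeasure μ]
    (hsupp : μ (Set.Icc (0 : Fin d → ℝ) 1)ᶜ = 0)
    (hpos : ∀ w : Wd d, 0 < μ (Qcube d w))
    (hbdry : ∀ w : Wd d, μ (frontier (Qcube d w)) = 0) :
    (∀ δ' δ : ℝ, 0 < δ' → δ' < δ →
      hfun d μ δ' ≤
        Filter.liminf (fun m : ℕ => log2 (hmdMeas d μ δ m) / (m : ℝ≥0∞)) Filter.atTop) ∧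
    dimqL d μ ≤ (⨅ (δ : ℝ) (_ : 0 < δ),
      Filter.liminf (fun m : ℕ => log2 (hmdMeas d μ δ m) / (m : ℝ≥0∞)) Filter.atTop) ∧
    ((⨅ (δ : ℝ) (_ : 0 < δ),
      Filter.liminf (fun m : ℕ => log2 (hmdMeas d μ δ m) / (m : ℝ≥0∞)) Filter.atTop) = 0 →
      dimqL d μ = 0) := by
  have main : ∀ δ' δ : ℝ, 0 < δ' → δ' < δ →
      hfun d μ δ' ≤
        Filter.liminf (fun m : ℕ => log2 (hmdMeas d μ δ m) / (m : ℝ≥0∞)) Filter.atTop := by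
    intro δ' δ hδ'0 hδ'δ
    have hδ : 0 < δ := hδ'0.trans hδ'δ
    simp only [hfun]
    refine iSup_le fun s => iSup_le fun hs => ?_
    obtain ⟨C, hC, hadm⟩ := hs
    have hθ : δ' / δ < 1 := (div_lt_one hδ).mpr hδ'δ
    have hθ0 : 0 < 1 - δ' / δ := by linarith
    obtain ⟨M, hM⟩ := exists_nat_gt ((1 + δ') / (1 - δ' / δ))
    have hev : ∀ᶠ m : ℕ in atTop,
        ENNReal.ofReal ((Real.logb 2 C + s * ((m : ℝ) - 1)) / m)
          ≤ log2 (hmdMeas d μ δ m) / (m : ℝ≥0∞) := by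
      filter_upwards [eventually_ge_atTop (max M 1)] with m hmge
      have hm1 : 1 ≤ m := le_trans (le_max_right _ _) hmge
      have hmM : (M : ℝ) ≤ m := Nat.cast_le.mpr (le_trans (le_max_left _ _) hmge)
      have hmR : (1 : ℝ) ≤ (m : ℝ) := by exact_mod_cast hm1
      have hMgt : (1 + δ') < (m : ℝ) * (1 - δ' / δ) := by
        have h := (div_lt_iff₀ hθ0).mp hM
        nlinarith
      have hcond : ∀ ω : Wd d, ω.length = ⌊(m : ℝ) / δ⌋₊ →
          ((ω.length : ℝ) + 1) * (1 + δ') < (ω.length : ℝ) + m := by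
        intro ω hω
        have hfl : ((⌊(m : ℝ) / δ⌋₊ : ℝ)) ≤ (m : ℝ) / δ := Nat.floor_le (by positivity)
        rw [hω]
        have h1 : ((⌊(m : ℝ) / δ⌋₊ : ℝ)) * δ' ≤ ((m : ℝ) / δ) * δ' := by nlinarith
        have h2 : ((m : ℝ) / δ) * δ' = (m : ℝ) * (δ' / δ) := by ring
        nlinarith
      have hlow : ENNReal.ofReal (C * ((2 : ℝ) ^ (m - 1)) ^ s) ≤ hmdMeas d μ δ m := by
        simp only [hmdMeas]
        refine le_iInf fun ω => le_iInf fun hω => le_iInf fun w => le_iInf fun hw => ?_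
        exact key_ratio d μ hpos hbdry δ' hδ'0 s C hC hadm ω w m hm1 hw.1 hw.2 (hcond ω hω)
      set t : ℝ := C * ((2 : ℝ) ^ (m - 1)) ^ s with htdef
      have h2pow : (0 : ℝ) < ((2 : ℝ) ^ (m - 1)) ^ s :=
        Real.rpow_pos_of_pos (by positivity) s
      have ht0 : 0 < t := mul_pos hC h2pow
      have hcast : ((m - 1 : ℕ) : ℝ) = (m : ℝ) - 1 := by
        rw [Nat.cast_sub hm1]; norm_num
      have hlogt : Real.logb 2 t = Real.logb 2 C + s * ((m : ℝ) - 1) := by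
        rw [htdef, Real.logb_mul (ne_of_gt hC) (ne_of_gt h2pow),
          ← Real.rpow_natCast 2 (m - 1), ← Real.rpow_mul (by norm_num),
          Real.logb_rpow (by norm_num) (by norm_num), hcast]
        ring
      have hlog : ENNReal.ofReal (Real.logb 2 t) ≤ log2 (hmdMeas d μ δ m) := by
        by_cases hT : hmdMeas d μ δ m = ⊤
        · rw [log2, if_pos hT]; exact le_top
        · rw [log2, if_neg hT]
          apply ENNReal.ofReal_le_ofReal
          have htT : t ≤ (hmdMeas d μ δ m).toReal :=
            (ENNReal.ofReal_le_iff_le_toReal hT).mp hlow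
          exact (Real.logb_le_logb (by norm_num) ht0 (lt_of_lt_of_le ht0 htT)).mpr htT
      calc ENNReal.ofReal ((Real.logb 2 C + s * ((m : ℝ) - 1)) / m)
          = ENNReal.ofReal (Real.logb 2 t) / (m : ℝ≥0∞) := by
            rw [hlogt, ENNReal.ofReal_div_of_pos (by linarith), ENNReal.ofReal_natCast]
        _ ≤ log2 (hmdMeas d μ δ m) / (m : ℝ≥0∞) := ENNReal.div_le_div_right hlog _
    have hreal : Tendsto (fun m : ℕ => (Real.logb 2 C + s * ((m : ℝ) - 1)) / m)
        atTop (nhds s) := by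
      have h1 : Tendsto (fun m : ℕ => (Real.logb 2 C - s) * (1 / (m : ℝ)) + s) atTop
          (nhds ((Real.logb 2 C - s) * 0 + s)) :=
        (tendsto_one_div_atTop_nhds_zero_nat.const_mul _).add_const s
      rw [mul_zero, zero_add] at h1
      refine Tendsto.congr' ?_ h1
      filter_upwards [eventually_ge_atTop 1] with m hm1
      have hm0 : (0 : ℝ) < m := by exact_mod_cast hm1
      field_simp
      ring
    have htend : Tendsto (fun m : ℕ =>
        ENNReal.ofReal ((Real.logb 2 C + s * ((m : ℝ) - 1)) / m)) atTop
        (nhds (ENNReal.ofReal s)) := (ENNReal.continuous_ofReal.tendsto s).comp hreal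
    calc ENNReal.ofReal s
        = Filter.liminf (fun m : ℕ =>
            ENNReal.ofReal ((Real.logb 2 C + s * ((m : ℝ) - 1)) / m)) atTop :=
          htend.liminf_eq.symm
      _ ≤ Filter.liminf (fun m : ℕ => log2 (hmdMeas d μ δ m) / (m : ℝ≥0∞)) atTop :=
          Filter.liminf_le_liminf hev
  have part2 : dimqL d μ ≤ (⨅ (δ : ℝ) (_ : 0 < δ),
      Filter.liminf (fun m : ℕ => log2 (hmdMeas d μ δ m) / (m : ℝ≥0∞)) Filter.atTop) := by
    refine le_iInf fun δ => le_iInf fun hδ => ?_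
    have h1 : dimqL d μ ≤ hfun d μ (δ / 2) := by
      simp only [dimqL]
      exact iInf₂_le (δ / 2) (half_pos hδ)
    exact h1.trans (main (δ / 2) δ (half_pos hδ) (half_lt_self hδ))
  exact ⟨main, part2, fun h0 => le_antisymm (part2.trans_eq h0) zero_le⟩
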